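/- arXiv:2603.07117 — 8 statements merged into one kernel-verified Lean document; each statement's English description precedes it below -/
import Mathlib

section
/- For all real x, y ∈ [0, π/2], it holds that sin x · sin y ≥ sin((2/π)·x·y). -/
open Real

theorem stmt_3 (x y : ℝ) (hx0 : 0 ≤ x) (hx1 : x ≤ π / 2) (hy0 : 0 ≤ y) (hy1 : y ≤ π / 2) :
    Real.sin x * Real.sin y ≥ Real.sin ((2 / π) * x * y) := by
  have hpi := Real.pi_pos
  set c : ℝ := 2 / π * y with hc
  have hc0 : 0 ≤ c := by positivity
  have hc1 : c ≤ 1 := by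
    rw [hc, div_mul_eq_mul_div, div_le_one hpi]; linarith
  have hcs : c ≤ Real.sin y := Real.mul_le_sin hy0 hy1
  set s : ℝ := Real.sin y with hs
  have hs0 : 0 ≤ s := Real.sin_nonneg_of_nonneg_of_le_pi hy0 (by linarith)
  set g : ℝ → ℝ := fun t => Real.sin t * s - Real.sin (c * t) with hg
  -- derivatives
  have hd1 : ∀ t : ℝ, HasDerivAt g (Real.cos t * s - c * Real.cos (c * t)) t := by
    intro t
    have h1 : HasDerivAt (fun t : ℝ => Real.sin t * s) (Real.cos t * s) t :=
      (Real.hasDerivAt_sin t).mul_const s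
    have h2 : HasDerivAt (fun t : ℝ => Real.sin (c * t)) (Real.cos (c * t) * c) t := by
      have := (Real.hasDerivAt_sin (c * t)).comp t ((hasDerivAt_id t).const_mul c)
      simpa [Function.comp_def] using this
    have := h1.sub h2
    exact this.congr_deriv (by ring)
  have hderiv : deriv g = fun t => Real.cos t * s - c * Real.cos (c * t) := by
    funext t; exact (hd1 t).deriv
  have hd2 : ∀ t : ℝ, HasDerivAt (deriv g) (-Real.sin t * s + c * (c * Real.sin (c * t))) t := by
    intro t
    rw [hderiv]
    have h1 : HasDerivAt (fun t : ℝ => Real.cos t * s) (-Real.sin t * s) t :=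
      (Real.hasDerivAt_cos t).mul_const s
    have h2 : HasDerivAt (fun t : ℝ => Real.cos (c * t)) (-Real.sin (c * t) * c) t := by
      have := (Real.hasDerivAt_cos (c * t)).comp t ((hasDerivAt_id t).const_mul c)
      simpa [Function.comp_def] using this
    have := h1.sub (h2.const_mul c)
    exact this.congr_deriv (by ring)
  -- concavity
  have hconc : ConcaveOn ℝ (Set.Icc 0 (π / 2)) g := by
    apply concaveOn_of_deriv2_nonpos (convex_Icc 0 (π / 2))
    · exact fun t _ => ((hd1 t).continuousAt).continuousWithinAt
    · exact fun t _ => ((hd1 t).differentiableAt).differentiableWithinAt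
    · exact fun t _ => ((hd2 t).differentiableAt).differentiableWithinAt
    · intro t ht
      rw [interior_Icc] at ht
      have ht0 : 0 < t := ht.1
      have ht1 : t < π / 2 := ht.2
      have e2 : deriv^[2] g t = -Real.sin t * s + c * (c * Real.sin (c * t)) := by
        have : deriv^[2] g = deriv (deriv g) := rfl
        rw [this]
        exact (hd2 t).deriv
      rw [e2]
      have hct0 : 0 ≤ c * t := by positivity
      have hct1 : c * t ≤ t := by nlinarith
      have hmono : Real.sin (c * t) ≤ Real.sin t := by
        apply Real.sin_le_sin_of_le_of_le_pi_div_two (by linarith) (by linarith) hct1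
      have hsin0 : 0 ≤ Real.sin (c * t) :=
        Real.sin_nonneg_of_nonneg_of_le_pi hct0 (by nlinarith)
      have hsint0 : 0 ≤ Real.sin t :=
        Real.sin_nonneg_of_nonneg_of_le_pi (le_of_lt ht0) (by linarith)
      have f1 : c * c * Real.sin (c * t) ≤ c * c * Real.sin t :=
        mul_le_mul_of_nonneg_left hmono (mul_nonneg hc0 hc0)
      have f2 : c * c ≤ s := by nlinarith
      have f3 : c * c * Real.sin t ≤ s * Real.sin t :=
        mul_le_mul_of_nonneg_right f2 hsint0
      nlinarith [f1, f3]
  -- endpoints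
  have hg0 : g 0 = 0 := by simp [hg]
  have hgpi : g (π / 2) = 0 := by
    have : c * (π / 2) = y := by
      rw [hc]; field_simp
    simp [hg, this, Real.sin_pi_div_two, hs]
  -- conclude
  have key : 0 ≤ g x := by
    set b : ℝ := x / (π / 2) with hb
    have hb0 : 0 ≤ b := by positivity
    have hb1 : b ≤ 1 := by
      rw [hb, div_le_one (by positivity)]; exact hx1
    have hcomb := hconc.2 (Set.mem_Icc.2 ⟨le_refl 0, (by positivity : (0:ℝ) ≤ π/2)⟩)
      (Set.mem_Icc.2 ⟨(by positivity : (0:ℝ) ≤ π/2), le_refl _⟩)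
      (by linarith : (0:ℝ) ≤ 1 - b) hb0 (by ring)
    have hx' : (1 - b) • (0:ℝ) + b • (π / 2) = x := by
      simp [hb, smul_eq_mul]
    rw [hx'] at hcomb
    simp [hg0, hgpi, smul_eq_mul] at hcomb
    simpa using hcomb
  have harg : (2 / π) * x * y = c * x := by rw [hc]; ring
  rw [ge_iff_le, harg]
  have : g x = Real.sin x * s - Real.sin (c * x) := rfl
  linarith [key, this ▸ key]
end

section
/- For every real number ℓ ≥ 1 and every real x with 0 ≤ x ≤ π/2, it holds that sin(π/(2ℓ)) · sin x ≥ sin(x/ℓ). -/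
open Real

lemma key_aux (c : ℝ) (hc0 : 0 < c) (hc1 : c ≤ 1) :
    ∀ t ∈ Set.Icc (0:ℝ) (π/2),
      Real.sin (c*t) * Real.cos t ≤ c * Real.cos (c*t) * Real.sin t := by
  have hderiv : ∀ u : ℝ,
      HasDerivAt (fun u => c * Real.cos (c*u) * Real.sin u - Real.sin (c*u) * Real.cos u)
        ((1 - c^2) * (Real.sin (c*u) * Real.sin u)) u := by
    intro u
    have hc : HasDerivAt (fun u : ℝ => c * u) c u := by
      simpa using (hasDerivAt_id u).const_mul c
    have hsin : HasDerivAt (fun u => Real.sin (c*u)) (Real.cos (c*u) * c) u :=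
      (Real.hasDerivAt_sin (c*u)).comp u hc
    have hcos : HasDerivAt (fun u => Real.cos (c*u)) (-Real.sin (c*u) * c) u :=
      (Real.hasDerivAt_cos (c*u)).comp u hc
    have h1 : HasDerivAt (fun u => c * Real.cos (c*u) * Real.sin u)
        ((c * (-Real.sin (c*u) * c)) * Real.sin u + (c * Real.cos (c*u)) * Real.cos u) u :=
      ((hcos.const_mul c).mul (Real.hasDerivAt_sin u))
    have h2 : HasDerivAt (fun u => Real.sin (c*u) * Real.cos u)
        ((Real.cos (c*u) * c) * Real.cos u + Real.sin (c*u) * (-Real.sin u)) u :=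
      hsin.mul (Real.hasDerivAt_cos u)
    refine (h1.sub h2).congr_deriv ?_
    ring
  have mono : MonotoneOn
      (fun u => c * Real.cos (c*u) * Real.sin u - Real.sin (c*u) * Real.cos u)
      (Set.Icc 0 (π/2)) := by
    apply monotoneOn_of_deriv_nonneg (convex_Icc _ _)
    · fun_prop
    · intro u _
      exact (hderiv u).differentiableAt.differentiableWithinAt
    · intro u hu
      rw [interior_Icc] at hu
      rw [(hderiv u).deriv]
      have h1 : 0 ≤ Real.sin (c*u) := by
        apply Real.sin_nonneg_of_nonneg_of_le_pi
        · exact mul_nonneg hc0.le hu.1.le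
        · nlinarith [Real.pi_pos, hu.1, hu.2, mul_le_of_le_one_left hu.1.le hc1]
      have h2 : 0 ≤ Real.sin u := by
        apply Real.sin_nonneg_of_nonneg_of_le_pi hu.1.le
        linarith [Real.pi_pos, hu.2]
      have h3 : 0 ≤ 1 - c^2 := by nlinarith
      exact mul_nonneg h3 (mul_nonneg h1 h2)
  intro t ht
  have h0 : (0:ℝ) ∈ Set.Icc (0:ℝ) (π/2) := by
    constructor <;> [rfl; positivity]
  have := mono h0 ht ht.1
  simpa using this

theorem stmt_4 (ℓ x : ℝ) (hℓ : 1 ≤ ℓ) (hx0 : 0 ≤ x) (hx1 : x ≤ π / 2) :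
    Real.sin (π / (2 * ℓ)) * Real.sin x ≥ Real.sin (x / ℓ) := by
  have hℓ0 : 0 < ℓ := by linarith
  rcases eq_or_lt_of_le hx0 with h | hx0'
  · have : x = 0 := h.symm
    subst this
    simp
  set c : ℝ := 1/ℓ with hc
  have hc0 : 0 < c := by positivity
  have hc1 : c ≤ 1 := by rw [hc]; rw [div_le_one hℓ0]; exact hℓ
  have hsinpos : ∀ t ∈ Set.Icc x (π/2), 0 < Real.sin t := by
    intro t ht
    apply Real.sin_pos_of_pos_of_lt_pi (lt_of_lt_of_le hx0' ht.1)
    linarith [Real.pi_pos, ht.2]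
  have mono : MonotoneOn (fun t => Real.sin (c*t) / Real.sin t) (Set.Icc x (π/2)) := by
    apply monotoneOn_of_deriv_nonneg (convex_Icc _ _)
    · apply ContinuousOn.div
      · fun_prop
      · fun_prop
      · intro t ht
        exact (hsinpos t ht).ne'
    · intro t ht
      rw [interior_Icc] at ht
      have hne : Real.sin t ≠ 0 := (hsinpos t ⟨ht.1.le, ht.2.le⟩).ne'
      have hc' : HasDerivAt (fun u : ℝ => c * u) c t := by
        simpa using (hasDerivAt_id t).const_mul c
      have hsin : HasDerivAt (fun u => Real.sin (c*u)) (Real.cos (c*t) * c) t :=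
        (Real.hasDerivAt_sin (c*t)).comp t hc'
      exact ((hsin.div (Real.hasDerivAt_sin t) hne).differentiableAt).differentiableWithinAt
    · intro t ht
      rw [interior_Icc] at ht
      have htIcc : t ∈ Set.Icc (0:ℝ) (π/2) := ⟨(lt_of_lt_of_le hx0' ht.1.le).le, ht.2.le⟩
      have hne : Real.sin t ≠ 0 := (hsinpos t ⟨ht.1.le, ht.2.le⟩).ne'
      have hc' : HasDerivAt (fun u : ℝ => c * u) c t := by
        simpa using (hasDerivAt_id t).const_mul c
      have hsin : HasDerivAt (fun u => Real.sin (c*u)) (Real.cos (c*t) * c) t :=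
        (Real.hasDerivAt_sin (c*t)).comp t hc'
      rw [HasDerivAt.deriv (f := fun t => Real.sin (c*t) / Real.sin t) (hsin.div (Real.hasDerivAt_sin t) hne)]
      have hk := key_aux c hc0 hc1 t htIcc
      apply div_nonneg
      · nlinarith
      · positivity
  have hx : x ∈ Set.Icc x (π/2) := ⟨le_refl x, hx1⟩
  have hpi2 : (π/2) ∈ Set.Icc x (π/2) := ⟨hx1, le_refl _⟩
  have h := mono hx hpi2 hx1
  simp only [Real.sin_pi_div_two, div_one] at h
  have hsx : 0 < Real.sin x := hsinpos x hx
  rw [div_le_iff₀ hsx] at h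
  have e1 : c * x = x / ℓ := by rw [hc]; ring
  have e2 : c * (π/2) = π / (2*ℓ) := by rw [hc]; ring
  rw [e1, e2] at h
  linarith
end

section
/- Fix y ∈ (0, π/2) and define f(x) = sin x · sin y − sin((2/π)·x·y) for x ∈ [0, π/2]. Then f''(x) < 0 for all x ∈ (0, π/2), i.e., f is strictly concave on (0, π/2). -/
open Real

theorem stmt_5 (y : ℝ) (hy0 : 0 < y) (hy1 : y < π / 2)
    (f : ℝ → ℝ) (hf : f = fun x => Real.sin x * Real.sin y - Real.sin ((2 / π) * x * y)) :
    (∀ x, 0 < x → x < π / 2 → deriv (deriv f) x < 0) ∧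
      StrictConcaveOn ℝ (Set.Ioo 0 (π / 2)) f := by
  have hπ : (0:ℝ) < π := pi_pos
  set c : ℝ := 2 / π * y with hc
  have hc0 : 0 < c := by positivity
  have hc1 : c < 1 := by
    rw [hc, div_mul_eq_mul_div, div_lt_one hπ]
    linarith
  have hcs : c ≤ Real.sin y := mul_le_sin hy0.le hy1.le
  -- inner function derivative
  have hinner : ∀ x : ℝ, HasDerivAt (fun x : ℝ => 2 / π * x * y) c x := by
    intro x
    have := ((hasDerivAt_id x).const_mul (2 / π)).mul_const y
    simpa [hc, mul_one] using this
  have hd1 : deriv f = fun x => Real.cos x * Real.sin y - Real.cos (2 / π * x * y) * c := by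
    funext x
    rw [hf]
    have h : HasDerivAt (fun x => Real.sin x * Real.sin y - Real.sin (2 / π * x * y))
        (Real.cos x * Real.sin y - Real.cos (2 / π * x * y) * c) x := by
      exact ((Real.hasDerivAt_sin x).mul_const _).sub
        ((Real.hasDerivAt_sin _).comp x (hinner x))
    exact h.deriv
  have hd2 : ∀ x, deriv (deriv f) x
      = -Real.sin x * Real.sin y + Real.sin (2 / π * x * y) * c * c := by
    intro x
    rw [hd1]
    have h : HasDerivAt (fun x => Real.cos x * Real.sin y - Real.cos (2 / π * x * y) * c)
        (-Real.sin x * Real.sin y + Real.sin (2 / π * x * y) * c * c) x := by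
      have h2 : HasDerivAt (fun x => Real.cos (2 / π * x * y) * c)
          (-Real.sin (2 / π * x * y) * c * c) x := by
        exact ((Real.hasDerivAt_cos _).comp x (hinner x)).mul_const c
      have := ((Real.hasDerivAt_cos x).mul_const (Real.sin y)).sub h2
      exact this.congr_deriv (by ring)
    exact h.deriv
  have key : ∀ x, 0 < x → x < π / 2 → deriv (deriv f) x < 0 := by
    intro x hx0 hx1
    rw [hd2]
    have hux : 2 / π * x * y = c * x := by rw [hc]; ring
    rw [hux]
    have hsx : 0 < Real.sin x := Real.sin_pos_of_pos_of_lt_pi hx0 (by linarith)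
    have hsucx : Real.sin (c * x) < Real.sin x := by
      apply Real.strictMonoOn_sin ⟨by nlinarith, le_of_lt (lt_of_lt_of_le (mul_lt_of_lt_one_left hx0 hc1) hx1.le)⟩
        ⟨by linarith, hx1.le⟩
      exact mul_lt_of_lt_one_left hx0 hc1
    have h1 : Real.sin (c * x) * c * c < Real.sin x * c * c := by nlinarith [mul_pos hc0 hc0]
    have h2 : Real.sin x * c * c ≤ Real.sin x * Real.sin y := by nlinarith [mul_pos hsx hc0, mul_nonneg hsx.le (sub_nonneg.2 hcs)]
    linarith
  refine ⟨key, ?_⟩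
  apply strictConcaveOn_of_deriv2_neg (convex_Ioo _ _)
  · rw [hf]; fun_prop
  · intro x hx
    rw [interior_Ioo] at hx
    simpa [Function.iterate_succ, Function.comp] using key x hx.1 hx.2
end

section
/- Let t > 3 be an integer and let i, i' be integers with 1 ≤ i < i' ≤ t. Set φ_i = (π/(2t))·i and φ_{i'} = (π/(2t))·i'. Then for any real angles θ, θ', |sin φ_i · sin φ_{i'} · cos(θ − θ') + cos φ_i · cos φ_{i'}| ≤ cos(π/(2t)). -/
open Real

theorem stmt_6 (t i i' : ℕ) (ht : 3 < t) (hi : 1 ≤ i) (hii' : i < i') (hi't : i' ≤ t)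
    (θ θ' : ℝ) :
    |Real.sin ((π / (2 * t)) * i) * Real.sin ((π / (2 * t)) * i') * Real.cos (θ - θ') +
      Real.cos ((π / (2 * t)) * i) * Real.cos ((π / (2 * t)) * i')| ≤
      Real.cos (π / (2 * t)) := by
  have ht0 : (0:ℝ) < t := by positivity
  have hu : (0:ℝ) < π / (2 * t) := by positivity
  set u := π / (2 * t) with hudef
  set a := u * i with ha
  set b := u * i' with hb
  have hgap : (i:ℝ) + 1 ≤ i' := by exact_mod_cast hii'
  have hi'le : (i':ℝ) ≤ t := by exact_mod_cast hi't
  have hi1 : (1:ℝ) ≤ i := by exact_mod_cast hi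
  have h2t : u * (2 * t) = π := by rw [hudef]; field_simp [ht0.ne']
  have ha0 : 0 < a := by positivity
  have hb0 : 0 < b := by nlinarith
  have hbπ2 : b ≤ π / 2 := by nlinarith
  have haπ2 : a ≤ π / 2 := by nlinarith
  have hsa : 0 ≤ Real.sin a := Real.sin_nonneg_of_nonneg_of_le_pi ha0.le (by linarith [Real.pi_pos])
  have hsb : 0 ≤ Real.sin b := Real.sin_nonneg_of_nonneg_of_le_pi hb0.le (by linarith [Real.pi_pos])
  have hcos1 : Real.cos (θ - θ') ≤ 1 := Real.cos_le_one _
  have hcosm1 : -1 ≤ Real.cos (θ - θ') := Real.neg_one_le_cos _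
  have hba1 : u ≤ b - a := by nlinarith
  have hbaπ : b - a ≤ π := by linarith [Real.pi_pos]
  have habu : a + b ≤ π - u := by nlinarith
  have hupper : Real.sin a * Real.sin b * Real.cos (θ - θ') + Real.cos a * Real.cos b ≤
      Real.cos u := by
    have h1 : Real.sin a * Real.sin b * Real.cos (θ - θ') + Real.cos a * Real.cos b ≤
        Real.cos (b - a) := by
      rw [Real.cos_sub b a]
      nlinarith [mul_nonneg hsa hsb, mul_nonneg (mul_nonneg hsa hsb) (by linarith : (0:ℝ) ≤ 1 - Real.cos (θ - θ'))]
    have h2 : Real.cos (b - a) ≤ Real.cos u :=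
      Real.cos_le_cos_of_nonneg_of_le_pi hu.le hbaπ hba1
    linarith
  have hlower : -Real.cos u ≤
      Real.sin a * Real.sin b * Real.cos (θ - θ') + Real.cos a * Real.cos b := by
    have h1 : Real.cos (a + b) ≤
        Real.sin a * Real.sin b * Real.cos (θ - θ') + Real.cos a * Real.cos b := by
      rw [Real.cos_add]
      nlinarith [mul_nonneg hsa hsb, mul_nonneg (mul_nonneg hsa hsb) (by linarith : (0:ℝ) ≤ Real.cos (θ - θ') + 1)]
    have h2 : Real.cos (π - u) ≤ Real.cos (a + b) :=
      Real.cos_le_cos_of_nonneg_of_le_pi (by linarith) (by linarith) habu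
    rw [Real.cos_pi_sub] at h2
    linarith
  rw [abs_le]
  exact ⟨hlower, hupper⟩
end

section
/- Let t > 3 and 1 ≤ i ≤ t be integers, and set φ_i = (π/(2t))·i. Then sin²(φ_i) · cos(π/(2i)) + cos²(φ_i) ≤ cos(π/(2t)). -/
open Real Set

lemma sin_mul_sin_key {x y : ℝ} (hx0 : 0 ≤ x) (hx : x ≤ π / 2)
    (hy0 : 0 ≤ y) (hy : y ≤ π / 2) :
    Real.sin (2 * y / π * x) ≤ Real.sin x * Real.sin y := by
  have hπ : (0:ℝ) < π := Real.pi_pos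
  set c := 2 * y / π with hc
  have hc0 : 0 ≤ c := by positivity
  have hc1 : c ≤ 1 := by
    rw [hc, div_le_one hπ]; linarith
  have hcA : c ≤ Real.sin y := by
    have := Real.mul_le_sin hy0 hy
    rw [hc]; rw [div_mul_eq_mul_div, mul_comm] at *; linarith [Real.mul_le_sin hy0 hy]
  set A := Real.sin y with hA
  have hA0 : 0 ≤ A := Real.sin_nonneg_of_nonneg_of_le_pi hy0 (by linarith)
  set f : ℝ → ℝ := fun x => Real.sin x * A - Real.sin (c * x) with hf
  have hconc : ConcaveOn ℝ (Icc 0 (π/2)) f := by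
    apply concaveOn_of_hasDerivWithinAt2_nonpos (f' := fun x => Real.cos x * A - c * Real.cos (c * x))
      (f'' := fun x => -Real.sin x * A + c^2 * Real.sin (c * x))
      (convex_Icc _ _)
    · fun_prop
    · intro z hz
      have h1 : HasDerivAt (fun x => Real.sin x * A - Real.sin (c * x))
          (Real.cos z * A - c * Real.cos (c * z)) z := by
        have := ((Real.hasDerivAt_sin (c * z)).comp z ((hasDerivAt_id z).const_mul c))
        exact (((Real.hasDerivAt_sin z).mul_const A).sub this).congr_deriv (by ring)
      exact h1.hasDerivWithinAt
    · intro z hz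
      have h2 : HasDerivAt (fun x => Real.cos x * A - c * Real.cos (c * x))
          (-Real.sin z * A + c^2 * Real.sin (c * z)) z := by
        have := ((Real.hasDerivAt_cos (c * z)).comp z ((hasDerivAt_id z).const_mul c)).const_mul c
        have h3 := ((Real.hasDerivAt_cos z).mul_const A).sub this
        exact h3.congr_deriv (by ring)
      exact h2.hasDerivWithinAt
    · intro z hz
      rw [interior_Icc] at hz
      obtain ⟨hz0, hz1⟩ := hz
      have hs1 : Real.sin (c * z) ≤ Real.sin z := by
        apply Real.sin_le_sin_of_le_of_le_pi_div_two (by nlinarith) (le_of_lt hz1)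
        nlinarith
      have hs0 : 0 ≤ Real.sin (c * z) :=
        Real.sin_nonneg_of_nonneg_of_le_pi (by positivity) (by nlinarith [Real.pi_pos])
      have hsz : 0 ≤ Real.sin z :=
        Real.sin_nonneg_of_nonneg_of_le_pi hz0.le (by linarith)
      have e1 : c^2 * Real.sin (c*z) ≤ c * Real.sin (c*z) :=
        mul_le_mul_of_nonneg_right (by nlinarith) hs0
      have e2 : c * Real.sin (c*z) ≤ A * Real.sin z := mul_le_mul hcA hs1 hs0 hA0
      nlinarith
  have h0 : f 0 = 0 := by simp [hf]
  have h1 : f (π/2) = 0 := by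
    have : c * (π/2) = y := by rw [hc]; field_simp
    simp [hf, this, hA]
  have hxmem : x ∈ Icc (0:ℝ) (π/2) := ⟨hx0, hx⟩
  have hb0 : 0 ≤ 2 * x / π := by positivity
  have hab : (1 - 2 * x / π) + 2 * x / π = 1 := by ring
  have ha0 : 0 ≤ 1 - 2 * x / π := by
    have : 2 * x / π ≤ 1 := by rw [div_le_one hπ]; linarith
    linarith
  have := hconc.2 (Set.left_mem_Icc.2 (by positivity)) (Set.right_mem_Icc.2 (by positivity)) ha0 hb0 hab
  rw [h0, h1] at this
  have hx' : (1 - 2 * x / π) • (0:ℝ) + (2 * x / π) • (π/2) = x := by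
    simp only [smul_eq_mul]
    field_simp
    ring
  rw [hx'] at this
  simp only [smul_eq_mul, mul_zero, zero_add] at this
  have h4 : 0 ≤ f x := by linarith
  simp only [hf] at h4
  linarith

set_option maxHeartbeats 1000000 in
theorem stmt_8 (t i : ℕ) (ht : 3 < t) (hi1 : 1 ≤ i) (hit : i ≤ t) :
    Real.sin ((π / (2 * t)) * i) ^ 2 * Real.cos (π / (2 * i)) +
      Real.cos ((π / (2 * t)) * i) ^ 2 ≤ Real.cos (π / (2 * t)) := by
  have hπ : (0:ℝ) < π := Real.pi_pos
  have ht' : (4:ℝ) ≤ (t:ℝ) := by exact_mod_cast ht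
  have hi' : (1:ℝ) ≤ (i:ℝ) := by exact_mod_cast hi1
  have hit' : (i:ℝ) ≤ (t:ℝ) := by exact_mod_cast hit
  set x : ℝ := π / (2 * t) * i with hxdef
  set y : ℝ := π / (4 * i) with hydef
  have hx0 : 0 ≤ x := by positivity
  have hx2 : x ≤ π / 2 := by
    rw [hxdef, div_mul_eq_mul_div, div_le_div_iff₀ (by linarith) (by linarith)]
    nlinarith
  have hy0 : 0 ≤ y := by positivity
  have hy2 : y ≤ π / 2 := by
    rw [hydef, div_le_div_iff₀ (by linarith) (by linarith)]
    nlinarith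
  have key := sin_mul_sin_key hx0 hx2 hy0 hy2
  have harg : 2 * y / π * x = π / (4 * t) := by
    rw [hydef, hxdef]
    field_simp
  rw [harg] at key
  have hti : π / (2 * i) = 2 * y := by rw [hydef]; field_simp; ring
  have htt : π / (2 * t) = 2 * (π / (4 * t)) := by field_simp; ring
  rw [hti, htt]
  have c1 : Real.cos (2 * y) = 1 - 2 * Real.sin y ^ 2 := by
    rw [Real.cos_two_mul']
    linarith [Real.sin_sq_add_cos_sq y]
  have c2 : Real.cos (2 * (π / (4 * t))) = 1 - 2 * Real.sin (π / (4 * t)) ^ 2 := by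
    rw [Real.cos_two_mul']
    linarith [Real.sin_sq_add_cos_sq (π / (4 * t))]
  have c3 : Real.cos x ^ 2 = 1 - Real.sin x ^ 2 := by
    linarith [Real.sin_sq_add_cos_sq x]
  have hs : 0 ≤ Real.sin (π / (4 * t)) := by
    apply Real.sin_nonneg_of_nonneg_of_le_pi (by positivity)
    rw [div_le_iff₀ (by linarith)]
    nlinarith
  have hsx : 0 ≤ Real.sin x := Real.sin_nonneg_of_nonneg_of_le_pi hx0 (by linarith)
  have hsy : 0 ≤ Real.sin y := Real.sin_nonneg_of_nonneg_of_le_pi hy0 (by linarith)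
  have sq : Real.sin (π / (4 * t)) ^ 2 ≤ (Real.sin x * Real.sin y) ^ 2 := by
    exact pow_le_pow_left₀ hs key 2
  rw [c1, c2, c3]
  have hr : (Real.sin x * Real.sin y) ^ 2 = Real.sin x ^ 2 * Real.sin y ^ 2 := by ring
  nlinarith [sq]
end

section
/- Let t > 3 be an integer and let Ω ⊂ ℝ³ be the set consisting of the north pole (0,0,1)ᵀ together with, for each i ∈ {1,…,t−1}, the 4i points (sin φ_i cos θ_{i,j}, sin φ_i sin θ_{i,j}, cos φ_i)ᵀ with φ_i = πi/(2t), θ_{i,j} = πj/(2i), j ∈ {0,…,4i−1}, and for i = t, the 2t points (cos θ_{t,j}, sin θ_{t,j}, 0)ᵀ with θ_{t,j} = πj/(2t), j ∈ {0,…,2t−1}. Then every pair of distinct vectors u, u' ∈ Ω satisfies |⟨u, u'⟩| ≤ cos(π/(2t)). -/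
set_option maxHeartbeats 1000000
open Real


lemma pisqA : π^2 < 9.8697 := by nlinarith [pi_lt_d6, pi_gt_d6]
lemma pisqB : (9.8695:ℝ) < π^2 := by nlinarith [pi_lt_d6, pi_gt_d6]

lemma harithR (T K : ℝ) (hT4 : 4 ≤ T) (hK1 : 1 ≤ K) (hTK : 2*K+1 ≤ T) :
    π/(4*T) ≤ (1 - (π/(2*T)*K)^2/2) * (π/(4*(T-K))) * (1 - (π/(2*T))^2/2) := by
  have hπ := pi_pos
  have hT0 : (0:ℝ) < T := by linarith
  have hI0 : (0:ℝ) < T - K := by linarith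
  have step1 : π^2*(K^2+1) ≤ 8*T*K := by
    nlinarith [pisqA, sq_nonneg (K-1), mul_le_mul_of_nonneg_right hTK (by linarith : (0:ℝ) ≤ K)]
  have hE : (1 - (π/(2*T)*K)^2/2) * (π/(4*(T-K))) * (1 - (π/(2*T))^2/2)
      = ((8*T^2 - π^2*K^2) * (8*T^2 - π^2) * π) / (256 * T^4 * (T-K)) := by
    field_simp
    ring
  rw [hE, div_le_div_iff₀ (by positivity) (by positivity)]
  have h11 : 32*π*T^3*(π^2*(K^2+1)) ≤ 32*π*T^3*(8*T*K) :=
    mul_le_mul_of_nonneg_left step1 (by positivity)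
  have h12 : (0:ℝ) ≤ π^5 * T * K^2 := by positivity
  nlinarith [h11, h12]

lemma sinlb {x : ℝ} (h0 : 0 < x) (h1 : x ≤ π/4) : x * (1 - π^2/64) ≤ sin x := by
  have hx1 : x ≤ 1 := by nlinarith [pi_lt_d6]
  have hs := sin_gt_sub_cube h0
  have hx2 : x^2 ≤ π^2/16 := by nlinarith [pi_gt_d6]
  nlinarith [mul_le_mul_of_nonneg_left hx2 h0.le]

lemma keyA (t i : ℕ) (ht : 4 ≤ t) (h1 : 1 ≤ i) (h2 : i ≤ t) :
    sin (π/(4*t)) ≤ sin (π/(2*t)*i) * sin (π/(4*i)) := by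
  have hπ := pi_pos
  have ht0 : (0:ℝ) < t := by positivity
  have hi0 : (0:ℝ) < i := by exact_mod_cast h1
  have hi1 : (1:ℝ) ≤ i := by exact_mod_cast h1
  have hit : (i:ℝ) ≤ t := by exact_mod_cast h2
  have ht4 : (4:ℝ) ≤ t := by exact_mod_cast ht
  have hs0 : sin (π/(4*t)) ≤ π/(4*t) := sin_le (by positivity)
  rcases eq_or_lt_of_le h2 with rfl | hlt
  · have e : π/(2*i)*i = π/2 := by field_simp
    rw [e, sin_pi_div_two, one_mul]
  · rcases le_or_gt (2*i) t with hc | hc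
    · -- case A : 2i ≤ t
      have hct : 2*(i:ℝ) ≤ t := by exact_mod_cast hc
      set a := π/(2*t)*i with ha
      set b := π/(4*i) with hb
      have ha0 : 0 < a := by positivity
      have hb0 : 0 < b := by positivity
      have haq : a ≤ π/4 := by
        rw [ha, div_mul_eq_mul_div, div_le_div_iff₀ (by positivity) (by norm_num)]
        nlinarith
      have hbq : b ≤ π/4 := by
        rw [hb, div_le_div_iff₀ (by positivity) (by norm_num)]
        nlinarith
      have la := sinlb ha0 haq
      have lb := sinlb hb0 hbq
      have hab : a * b = π^2/(8*t) := by rw [ha, hb]; field_simp; ring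
      have hnum : π*8 ≤ π^2*(1-π^2/64)^2*4 := by nlinarith [pisqA, pisqB, pi_gt_d6]
      have key : π/(4*t) ≤ (a*(1-π^2/64)) * (b*(1-π^2/64)) := by
        have e : (a*(1-π^2/64)) * (b*(1-π^2/64)) = π^2*(1-π^2/64)^2/(8*t) := by
          rw [show (a*(1-π^2/64)) * (b*(1-π^2/64)) = (a*b)*(1-π^2/64)^2 from by ring, hab]
          ring
        rw [e, div_le_div_iff₀ (by positivity) (by positivity)]
        have h := mul_le_mul_of_nonneg_right hnum ht0.le
        linarith
      calc sin (π/(4*t)) ≤ π/(4*t) := hs0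
        _ ≤ (a*(1-π^2/64)) * (b*(1-π^2/64)) := key
        _ ≤ sin a * sin b := by
            have h1' : (0:ℝ) ≤ b*(1-π^2/64) := by nlinarith [pisqA]
            exact mul_le_mul la lb h1' (sin_nonneg_of_nonneg_of_le_pi ha0.le (by nlinarith))
    · -- case B : t < 2i
      set K : ℝ := ((t - i : ℕ) : ℝ) with hKdef
      have hK : K = (t:ℝ) - i := by rw [hKdef]; push_cast [Nat.cast_sub h2]; ring
      have hK1 : (1:ℝ) ≤ K := by
        have : i + 1 ≤ t := hlt
        have h' : (i:ℝ) + 1 ≤ t := by exact_mod_cast this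
        rw [hK]; linarith
      have hK0 : (0:ℝ) < K := by linarith
      have hT2K : 2*K + 1 ≤ (t:ℝ) := by
        have h2i : t + 1 ≤ 2*i := hc
        have h' : (t:ℝ) + 1 ≤ 2*i := by exact_mod_cast h2i
        rw [hK]; linarith
      set c := π/(2*(t:ℝ)) with hc'
      have hc0 : 0 < c := by positivity
      have hc8 : c ≤ π/8 := by
        rw [hc', div_le_div_iff₀ (by positivity) (by norm_num)]; nlinarith
      have e1 : sin (π/(2*t)*i) = cos (c*K) := by
        rw [← sin_pi_div_two_sub]
        congr 1
        rw [hK, hc']; field_simp; ring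
      set b := π/(4*(i:ℝ)) with hb
      have hb0 : 0 < b := by positivity
      have hb2 : b < π/2 := by
        rw [hb, div_lt_div_iff₀ (by positivity) (by norm_num)]; nlinarith
      have hcb : 0 < cos b := cos_pos_of_mem_Ioo ⟨by linarith, hb2⟩
      have e2 : b * cos b ≤ sin b := by
        have h := lt_tan hb0 hb2
        rw [tan_eq_sin_div_cos, lt_div_iff₀ hcb] at h
        linarith
      have hbc : b ≤ c := by
        rw [hb, hc', div_le_div_iff₀ (by positivity) (by positivity)]
        have h' : (t:ℝ) < 2*i := by exact_mod_cast hc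
        nlinarith
      have e3 : cos c ≤ cos b := cos_le_cos_of_nonneg_of_le_pi hb0.le (by linarith) hbc
      have e4 : 1 - (c*K)^2/2 ≤ cos (c*K) := one_sub_sq_div_two_le_cos
      have e5 : 1 - c^2/2 ≤ cos c := one_sub_sq_div_two_le_cos
      have hcK : c*K ≤ π/4 := by
        rw [hc', div_mul_eq_mul_div, div_le_div_iff₀ (by positivity) (by norm_num)]
        nlinarith
      have hck0 : 0 < c*K := mul_pos hc0 hK0
      have hcoscK : 0 < cos (c*K) := cos_pos_of_mem_Ioo ⟨by linarith, by linarith⟩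
      have hi' : (i:ℝ) = (t:ℝ) - K := by rw [hK]; ring
      have harith : π/(4*(t:ℝ)) ≤ (1 - (c*K)^2/2) * b * (1 - c^2/2) := by
        have H := harithR t K ht4 hK1 hT2K
        rw [hb, hi', hc']
        exact H
      have hcpos2 : 0 < 1 - c^2/2 := by nlinarith [pisqA]
      calc sin (π/(4*t)) ≤ π/(4*t) := hs0
        _ ≤ (1 - (c*K)^2/2) * b * (1 - c^2/2) := harith
        _ ≤ cos (c*K) * b * (1 - c^2/2) :=
            mul_le_mul_of_nonneg_right (mul_le_mul_of_nonneg_right e4 hb0.le) hcpos2.le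
        _ ≤ cos (c*K) * b * cos c := mul_le_mul_of_nonneg_left e5 (by positivity)
        _ ≤ cos (c*K) * b * cos b := mul_le_mul_of_nonneg_left e3 (by positivity)
        _ = cos (c*K) * (b * cos b) := by ring
        _ ≤ cos (c*K) * sin b := mul_le_mul_of_nonneg_left e2 hcoscK.le
        _ = sin (π/(2*t)*i) * sin b := by rw [e1]

lemma cos_double_sin (x : ℝ) : cos (2*x) = 1 - 2 * sin x ^ 2 := by
  rw [cos_two_mul, cos_sq']; ring

lemma cosm_le (i m : ℕ) (h1 : 1 ≤ i) (hm1 : 1 ≤ m) (hm2 : m < 4*i) :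
    cos (π/(2*i)*m) ≤ cos (π/(2*i)) := by
  have hπ := pi_pos
  have hi0 : (0:ℝ) < i := by exact_mod_cast h1
  have hd0 : (0:ℝ) < π/(2*i) := by positivity
  have e2 : π/(2*i)*(2*i) = π := by field_simp
  rcases le_or_gt m (2*i) with h | h
  · have hm : (m:ℝ) ≤ 2*i := by exact_mod_cast h
    have hm1' : (1:ℝ) ≤ m := by exact_mod_cast hm1
    apply cos_le_cos_of_nonneg_of_le_pi hd0.le
    · nlinarith [mul_le_mul_of_nonneg_left hm hd0.le]
    · exact le_mul_of_one_le_right hd0.le hm1'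
  · set n := 4*i - m with hn
    have hn1 : 1 ≤ n := by omega
    have hn2 : n < 2*i := by omega
    have hcast : (n:ℝ) = 4*i - m := by
      rw [hn]; push_cast [Nat.cast_sub hm2.le]; ring
    have e3 : π/(2*i)*m = 2*π - π/(2*i)*n := by
      rw [hcast]; field_simp; ring
    rw [e3, cos_two_pi_sub]
    have hn1' : (1:ℝ) ≤ n := by exact_mod_cast hn1
    have hn2' : (n:ℝ) ≤ 2*i := by exact_mod_cast hn2.le
    apply cos_le_cos_of_nonneg_of_le_pi hd0.le
    · nlinarith [mul_le_mul_of_nonneg_left hn2' hd0.le]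
    · exact le_mul_of_one_le_right hd0.le hn1'

lemma sameRing (t i m : ℕ) (ht : 4 ≤ t) (h1 : 1 ≤ i) (h2 : i < t) (hm1 : 1 ≤ m) (hm2 : m < 4*i) :
    |sin (π/(2*t)*i)^2 * cos (π/(2*i)*m) + cos (π/(2*t)*i)^2| ≤ cos (π/(2*t)) := by
  have hπ := pi_pos
  have ht0 : (0:ℝ) < t := by positivity
  have hi0 : (0:ℝ) < i := by exact_mod_cast h1
  have hd0 : (0:ℝ) < π/(2*t) := by positivity
  have ht4 : (4:ℝ) ≤ t := by exact_mod_cast ht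
  set S := sin (π/(2*t)*i) with hS
  set C := cos (π/(2*t)*i) with hC
  have pyth : S^2 + C^2 = 1 := sin_sq_add_cos_sq _
  have hkey := keyA t i ht h1 h2.le
  have hs0 : (0:ℝ) ≤ sin (π/(4*t)) := by
    apply sin_nonneg_of_nonneg_of_le_pi (by positivity)
    exact div_le_self hπ.le (by linarith : (1:ℝ) ≤ 4*t)
  have hid1 : cos (π/(2*i)) = 1 - 2 * sin (π/(4*i))^2 := by
    rw [show π/(2*(i:ℝ)) = 2*(π/(4*i)) from by field_simp; ring, cos_double_sin]
  have hid2 : cos (π/(2*t)) = 1 - 2 * sin (π/(4*t))^2 := by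
    rw [show π/(2*(t:ℝ)) = 2*(π/(4*t)) from by field_simp; ring, cos_double_sin]
  have hsq : sin (π/(4*t)) * sin (π/(4*t)) ≤ (S * sin (π/(4*i))) * (S * sin (π/(4*i))) :=
    mul_le_mul hkey hkey hs0 ((hs0.trans hkey).trans (le_refl _))
  have hcm := cosm_le i m h1 hm1 hm2
  rw [abs_le]
  constructor
  · -- lower bound
    have hcmlow := neg_one_le_cos (π/(2*i)*(m:ℝ))
    have hlow1 : C^2 - S^2 ≤ S^2 * cos (π/(2*i)*m) + C^2 := by nlinarith [sq_nonneg S]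
    have hdid : cos (2*(π/(2*t)*i)) = C^2 - S^2 := by
      rw [cos_two_mul]; rw [hC]; nlinarith [sin_sq_add_cos_sq (π/(2*t)*i)]
    have hit : (i:ℝ) ≤ t - 1 := by
      have : (i:ℝ) + 1 ≤ t := by exact_mod_cast h2
      linarith
    have harg : 2*(π/(2*t)*i) ≤ π - 2*(π/(2*t)) := by
      have e2 : π/(2*t)*(2*t) = π := by field_simp
      nlinarith [mul_le_mul_of_nonneg_left hit hd0.le]
    have hlow2 : cos (π - 2*(π/(2*t))) ≤ cos (2*(π/(2*t)*i)) := by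
      apply cos_le_cos_of_nonneg_of_le_pi (by positivity) (by linarith [mul_pos hd0 (by norm_num : (0:ℝ) < 2)]) harg
    rw [cos_pi_sub] at hlow2
    have hlow3 : cos (2*(π/(2*t))) ≤ cos (π/(2*t)) := by
      apply cos_le_cos_of_nonneg_of_le_pi hd0.le
      · have e2 : π/(2*t)*(2*t) = π := by field_simp
        nlinarith
      · linarith
    rw [hdid] at hlow2
    linarith
  · -- upper bound
    have h5 : S^2 * cos (π/(2*i)*m) + C^2 ≤ S^2 * cos (π/(2*i)) + C^2 := by
      nlinarith [sq_nonneg S]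
    have h6 : S^2 * cos (π/(2*i)) + C^2 = 1 - 2*(S*sin (π/(4*i)))^2 := by
      rw [hid1]; nlinarith [pyth]
    rw [hid2]
    nlinarith [hsq]

section
variable (t : ℕ)

lemma NR' (i : ℕ) (ht : 4 ≤ t) (h1 : 1 ≤ i) (h2 : i ≤ t) :
    |cos (π/(2*t)*i)| ≤ cos (π/(2*t)) := by
  have hπ := pi_pos
  have ht0 : (0:ℝ) < t := by positivity
  have hd0 : (0:ℝ) < π/(2*t) := by positivity
  have hi1 : (1:ℝ) ≤ i := by exact_mod_cast h1
  have hit : (i:ℝ) ≤ t := by exact_mod_cast h2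
  have harg1 : π/(2*t) ≤ π/(2*t)*i := le_mul_of_one_le_right hd0.le hi1
  have e2 : π/(2*t)*t = π/2 := by field_simp
  have harg2 : π/(2*t)*i ≤ π/2 := by nlinarith [mul_le_mul_of_nonneg_left hit hd0.le]
  rw [abs_of_nonneg (cos_nonneg_of_mem_Icc ⟨by linarith, harg2⟩)]
  exact cos_le_cos_of_nonneg_of_le_pi hd0.le (by linarith) harg1

lemma EE' (m : ℕ) (ht : 4 ≤ t) (h1 : 1 ≤ m) (h2 : m < 2*t) :
    |cos (π/(2*t)*m)| ≤ cos (π/(2*t)) := by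
  have hπ := pi_pos
  have ht0 : (0:ℝ) < t := by positivity
  have hd0 : (0:ℝ) < π/(2*t) := by positivity
  have hm1 : (1:ℝ) ≤ m := by exact_mod_cast h1
  have hm2 : (m:ℝ) + 1 ≤ 2*t := by exact_mod_cast h2
  have harg1 : π/(2*t) ≤ π/(2*t)*m := le_mul_of_one_le_right hd0.le hm1
  have e2 : π/(2*t)*(2*t) = π := by field_simp
  have harg2 : π/(2*t)*m ≤ π - π/(2*t) := by nlinarith [mul_le_mul_of_nonneg_left hm2 hd0.le]
  rw [abs_le]
  constructor
  · have h := cos_le_cos_of_nonneg_of_le_pi (by positivity : (0:ℝ) ≤ π/(2*t)*m) (by linarith) harg2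
    rw [cos_pi_sub] at h
    linarith
  · exact cos_le_cos_of_nonneg_of_le_pi hd0.le (by linarith) harg1

lemma ER' (i : ℕ) (ht : 4 ≤ t) (h1 : 1 ≤ i) (h2 : i < t) :
    sin (π/(2*t)*i) ≤ cos (π/(2*t)) := by
  have hπ := pi_pos
  have ht0 : (0:ℝ) < t := by positivity
  have hd0 : (0:ℝ) < π/(2*t) := by positivity
  have hit : (i:ℝ) + 1 ≤ t := by exact_mod_cast h2
  have e2 : π/(2*t)*t = π/2 := by field_simp
  have h3 : π/(2*t)*((i:ℝ)+1) ≤ π/(2*t)*t := mul_le_mul_of_nonneg_left hit hd0.le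
  rw [← cos_pi_div_two_sub]
  apply cos_le_cos_of_nonneg_of_le_pi hd0.le
  · nlinarith [mul_nonneg hd0.le (by positivity : (0:ℝ) ≤ (i:ℝ))]
  · nlinarith

lemma crossLT' (i i' : ℕ) (Δ : ℝ) (ht : 4 ≤ t) (h1 : 1 ≤ i) (h2 : i < i') (h3 : i' ≤ t) :
    |sin (π/(2*t)*i) * sin (π/(2*t)*i') * cos Δ + cos (π/(2*t)*i) * cos (π/(2*t)*i')|
      ≤ cos (π/(2*t)) := by
  have hπ := pi_pos
  have ht0 : (0:ℝ) < t := by positivity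
  have hd0 : (0:ℝ) < π/(2*t) := by positivity
  have hi1 : (1:ℝ) ≤ i := by exact_mod_cast h1
  have hii : (i:ℝ) + 1 ≤ i' := by exact_mod_cast h2
  have hit : (i':ℝ) ≤ t := by exact_mod_cast h3
  have e2 : π/(2*t)*t = π/2 := by field_simp
  have hSi : 0 ≤ sin (π/(2*t)*i) := by
    apply sin_nonneg_of_nonneg_of_le_pi (by positivity)
    nlinarith [mul_le_mul_of_nonneg_left (show (i:ℝ) ≤ t by linarith) hd0.le]
  have hSi' : 0 ≤ sin (π/(2*t)*i') := by
    apply sin_nonneg_of_nonneg_of_le_pi (by positivity)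
    nlinarith [mul_le_mul_of_nonneg_left hit hd0.le]
  have hcosΔ := neg_one_le_cos Δ
  have hcosΔ' := cos_le_one Δ
  have hSS := mul_nonneg hSi hSi'
  rw [abs_le]
  constructor
  · -- lower: ≥ cos(φ+φ') = cos(δ(i+i')) ≥ cos(π−δ) = −cos δ
    have hadd : cos (π/(2*t)*i + π/(2*t)*i') = cos (π/(2*t)*i) * cos (π/(2*t)*i')
        - sin (π/(2*t)*i) * sin (π/(2*t)*i') := cos_add _ _
    have hsum : π/(2*t)*i + π/(2*t)*i' ≤ π - π/(2*t) := by
      have : (i:ℝ) + i' ≤ 2*t - 1 := by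
        have : (i:ℝ) ≤ t - 1 := by linarith
        linarith
      nlinarith [mul_le_mul_of_nonneg_left this hd0.le]
    have hlow : cos (π - π/(2*t)) ≤ cos (π/(2*t)*i + π/(2*t)*i') := by
      apply cos_le_cos_of_nonneg_of_le_pi (by positivity) (by linarith) hsum
    rw [cos_pi_sub] at hlow
    nlinarith
  · -- upper: ≤ cos(φ'−φ) = cos(δ(i'−i)) ≤ cos δ
    have hsub : cos (π/(2*t)*i' - π/(2*t)*i) = cos (π/(2*t)*i') * cos (π/(2*t)*i)
        + sin (π/(2*t)*i') * sin (π/(2*t)*i) := cos_sub _ _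
    have hd1 : π/(2*t) ≤ π/(2*t)*i' - π/(2*t)*i := by
      nlinarith [mul_le_mul_of_nonneg_left hii hd0.le]
    have hd2 : π/(2*t)*i' - π/(2*t)*i ≤ π := by
      nlinarith [mul_le_mul_of_nonneg_left hit hd0.le, mul_nonneg hd0.le (by positivity : (0:ℝ) ≤ (i:ℝ))]
    have hup : cos (π/(2*t)*i' - π/(2*t)*i) ≤ cos (π/(2*t)) :=
      cos_le_cos_of_nonneg_of_le_pi hd0.le hd2 hd1
    nlinarith

lemma crossNE' (i i' : ℕ) (Δ : ℝ) (ht : 4 ≤ t) (h1 : 1 ≤ i) (h1' : 1 ≤ i') (h2 : i ≠ i')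
    (h3 : i ≤ t) (h3' : i' ≤ t) :
    |sin (π/(2*t)*i) * sin (π/(2*t)*i') * cos Δ + cos (π/(2*t)*i) * cos (π/(2*t)*i')|
      ≤ cos (π/(2*t)) := by
  rcases lt_or_gt_of_ne h2 with h | h
  · exact crossLT' t i i' Δ ht h1 h h3'
  · have := crossLT' t i' i Δ ht h1' h h3
    rwa [show sin (π/(2*t)*i') * sin (π/(2*t)*i) * cos Δ + cos (π/(2*t)*i') * cos (π/(2*t)*i)
        = sin (π/(2*t)*i) * sin (π/(2*t)*i') * cos Δ + cos (π/(2*t)*i) * cos (π/(2*t)*i')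
      from by ring] at this

end

lemma dot3 (a b c a' b' c' : ℝ) :
    (∑ k : Fin 3, (![a,b,c] : Fin 3 → ℝ) k * (![a',b',c'] : Fin 3 → ℝ) k)
      = a*a' + b*b' + c*c' := by
  simp [Fin.sum_univ_three]

lemma sinφ_nonneg (t i : ℕ) (ht : 1 ≤ t) (h2 : i ≤ t) : 0 ≤ sin (π/(2*(t:ℝ))*i) := by
  have hπ := pi_pos
  have ht0 : (0:ℝ) < t := by exact_mod_cast Nat.lt_of_lt_of_le Nat.zero_lt_one ht
  have hd0 : (0:ℝ) < π/(2*t) := by positivity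
  have hit : (i:ℝ) ≤ t := by exact_mod_cast h2
  have e2 : π/(2*(t:ℝ))*t = π/2 := by field_simp
  apply sin_nonneg_of_nonneg_of_le_pi (by positivity)
  nlinarith [mul_le_mul_of_nonneg_left hit hd0.le]

theorem stmt_10 (t : ℕ) (ht : 3 < t) (Ω : Set (Fin 3 → ℝ))
    (hΩ : Ω = {![0, 0, 1]} ∪
      (⋃ i ∈ Set.Icc 1 (t - 1), ⋃ j ∈ Set.Iio (4 * i),
        {![Real.sin ((π / (2 * t)) * i) * Real.cos ((π / (2 * i)) * j),
           Real.sin ((π / (2 * t)) * i) * Real.sin ((π / (2 * i)) * j),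
           Real.cos ((π / (2 * t)) * i)]}) ∪
      (⋃ j ∈ Set.Iio (2 * t),
        {![Real.cos ((π / (2 * t)) * j), Real.sin ((π / (2 * t)) * j), 0]})) :
    ∀ u ∈ Ω, ∀ u' ∈ Ω, u ≠ u' →
      |∑ k : Fin 3, u k * u' k| ≤ Real.cos (π / (2 * t)) := by
  subst hΩ
  have ht4 : 4 ≤ t := ht
  have hπ := pi_pos
  have ht0 : (0:ℝ) < t := by positivity
  have ht4' : (4:ℝ) ≤ t := by exact_mod_cast ht4
  have hcosδ : (0:ℝ) ≤ cos (π/(2*t)) := by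
    apply cos_nonneg_of_mem_Icc
    constructor
    · have : (0:ℝ) ≤ π/(2*t) := by positivity
      linarith
    · rw [div_le_div_iff₀ (by positivity) (by norm_num)]
      nlinarith
  intro u hu u' hu' hne
  simp only [Set.mem_union, Set.mem_iUnion, Set.mem_singleton_iff, Set.mem_Icc,
    Set.mem_Iio, exists_prop] at hu hu'
  rcases hu with (rfl | ⟨i, ⟨hi1, hi2⟩, j, hj, rfl⟩) | ⟨j, hj, rfl⟩ <;>
    rcases hu' with (rfl | ⟨i', ⟨hi1', hi2'⟩, j', hj', rfl⟩) | ⟨j', hj', rfl⟩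
  · exact absurd rfl hne
  · -- np vs ring
    rw [dot3, show (0:ℝ) * (sin (π/(2*t)*i') * cos (π/(2*i')*j'))
        + 0 * (sin (π/(2*t)*i') * sin (π/(2*i')*j')) + 1 * cos (π/(2*t)*i')
        = cos (π/(2*t)*i') from by ring]
    exact NR' t i' ht4 hi1' (by omega)
  · -- np vs equator
    rw [dot3, show (0:ℝ) * cos (π/(2*t)*j') + 0 * sin (π/(2*t)*j') + 1 * 0 = 0 from by ring,
      abs_zero]
    exact hcosδ
  · -- ring vs np
    rw [dot3, show sin (π/(2*t)*i) * cos (π/(2*i)*j) * 0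
        + sin (π/(2*t)*i) * sin (π/(2*i)*j) * 0 + cos (π/(2*t)*i) * 1
        = cos (π/(2*t)*i) from by ring]
    exact NR' t i ht4 hi1 (by omega)
  · -- ring vs ring
    rw [dot3, show sin (π/(2*t)*i) * cos (π/(2*i)*j) * (sin (π/(2*t)*i') * cos (π/(2*i')*j'))
        + sin (π/(2*t)*i) * sin (π/(2*i)*j) * (sin (π/(2*t)*i') * sin (π/(2*i')*j'))
        + cos (π/(2*t)*i) * cos (π/(2*t)*i')
        = sin (π/(2*t)*i) * sin (π/(2*t)*i') * cos (π/(2*i)*j - π/(2*i')*j')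
          + cos (π/(2*t)*i) * cos (π/(2*t)*i') from by rw [cos_sub]; ring]
    rcases eq_or_ne i i' with rfl | hne'
    · rcases lt_trichotomy j j' with h | rfl | h
      · rw [show π/(2*(i:ℝ))*j - π/(2*(i:ℝ))*j' = -(π/(2*(i:ℝ))*((j'-j : ℕ):ℝ)) from by
            push_cast [Nat.cast_sub h.le]; ring, cos_neg,
          show sin (π/(2*t)*i) * sin (π/(2*t)*i) * cos (π/(2*(i:ℝ))*((j'-j : ℕ):ℝ))
            + cos (π/(2*t)*i) * cos (π/(2*t)*i)
            = sin (π/(2*t)*i)^2 * cos (π/(2*(i:ℝ))*((j'-j : ℕ):ℝ)) + cos (π/(2*t)*i)^2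
            from by ring]
        exact sameRing t i (j'-j) ht4 hi1 (by omega) (by omega) (by omega)
      · exact absurd rfl hne
      · rw [show π/(2*(i:ℝ))*j - π/(2*(i:ℝ))*j' = π/(2*(i:ℝ))*((j-j' : ℕ):ℝ) from by
            push_cast [Nat.cast_sub h.le]; ring,
          show sin (π/(2*t)*i) * sin (π/(2*t)*i) * cos (π/(2*(i:ℝ))*((j-j' : ℕ):ℝ))
            + cos (π/(2*t)*i) * cos (π/(2*t)*i)
            = sin (π/(2*t)*i)^2 * cos (π/(2*(i:ℝ))*((j-j' : ℕ):ℝ)) + cos (π/(2*t)*i)^2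
            from by ring]
        exact sameRing t i (j-j') ht4 hi1 (by omega) (by omega) (by omega)
    · exact crossNE' t i i' _ ht4 hi1 hi1' hne' (by omega) (by omega)
  · -- ring vs equator
    rw [dot3, show sin (π/(2*t)*i) * cos (π/(2*i)*j) * cos (π/(2*t)*j')
        + sin (π/(2*t)*i) * sin (π/(2*i)*j) * sin (π/(2*t)*j')
        + cos (π/(2*t)*i) * 0
        = sin (π/(2*t)*i) * cos (π/(2*i)*j - π/(2*t)*j') from by rw [cos_sub]; ring]
    have hsnn : 0 ≤ sin (π/(2*(t:ℝ))*i) := sinφ_nonneg t i (by omega) (by omega)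
    rw [abs_mul, abs_of_nonneg hsnn]
    calc sin (π/(2*(t:ℝ))*i) * |cos (π/(2*i)*j - π/(2*t)*j')|
        ≤ sin (π/(2*(t:ℝ))*i) * 1 := mul_le_mul_of_nonneg_left (abs_cos_le_one _) hsnn
      _ = sin (π/(2*(t:ℝ))*i) := mul_one _
      _ ≤ cos (π/(2*t)) := ER' t i ht4 hi1 (by omega)
  · -- equator vs np
    rw [dot3, show cos (π/(2*t)*j) * 0 + sin (π/(2*t)*j) * 0 + 0 * 1 = 0 from by ring,
      abs_zero]
    exact hcosδ
  · -- equator vs ring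
    rw [dot3, show cos (π/(2*t)*j) * (sin (π/(2*t)*i') * cos (π/(2*i')*j'))
        + sin (π/(2*t)*j) * (sin (π/(2*t)*i') * sin (π/(2*i')*j'))
        + 0 * cos (π/(2*t)*i')
        = sin (π/(2*t)*i') * cos (π/(2*t)*j - π/(2*i')*j') from by rw [cos_sub]; ring]
    have hsnn : 0 ≤ sin (π/(2*(t:ℝ))*i') := sinφ_nonneg t i' (by omega) (by omega)
    rw [abs_mul, abs_of_nonneg hsnn]
    calc sin (π/(2*(t:ℝ))*i') * |cos (π/(2*t)*j - π/(2*i')*j')|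
        ≤ sin (π/(2*(t:ℝ))*i') * 1 := mul_le_mul_of_nonneg_left (abs_cos_le_one _) hsnn
      _ = sin (π/(2*(t:ℝ))*i') := mul_one _
      _ ≤ cos (π/(2*t)) := ER' t i' ht4 hi1' (by omega)
  · -- equator vs equator
    rw [dot3, show cos (π/(2*t)*j) * cos (π/(2*t)*j')
        + sin (π/(2*t)*j) * sin (π/(2*t)*j') + 0 * 0
        = cos (π/(2*t)*j - π/(2*t)*j') from by rw [cos_sub]; ring]
    rcases lt_trichotomy j j' with h | rfl | h
    · rw [show π/(2*(t:ℝ))*j - π/(2*(t:ℝ))*j' = -(π/(2*(t:ℝ))*((j'-j : ℕ):ℝ)) from by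
          push_cast [Nat.cast_sub h.le]; ring, cos_neg]
      exact EE' t (j'-j) ht4 (by omega) (by omega)
    · exact absurd rfl hne
    · rw [show π/(2*(t:ℝ))*j - π/(2*(t:ℝ))*j' = π/(2*(t:ℝ))*((j-j' : ℕ):ℝ) from by
          push_cast [Nat.cast_sub h.le]; ring]
      exact EE' t (j-j') ht4 (by omega) (by omega)
end

section
/- Let H be an r × n real matrix with unit-norm columns, 1 ≤ m ≤ r+1, and 0 ≤ ρ < 1 such that for every j, every (m−1)-subset J' of {0,…,n−1}∖{j}, and every nonzero u in the span of {h_{j'} : j' ∈ J'}, |⟨h_j, u⟩|/‖u‖₂ ≤ ρ. Let J ⊆ {0,…,n−1} with |J| = m, and let u = Σ_{j∈J} a_j h_j with ‖u‖₂ ≤ 2n. Then |a_j| ≤ 2n/√(1 − ρ²) for every j ∈ J. -/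
open RealInnerProductSpace

theorem stmt_13 (r n m : ℕ) (hm1 : 1 ≤ m) (hmr : m ≤ r + 1)
    (h : Fin n → EuclideanSpace ℝ (Fin r)) (hunit : ∀ j, ‖h j‖ = 1)
    (ρ : ℝ) (hρ0 : 0 ≤ ρ) (hρ1 : ρ < 1)
    (hcoh : ∀ j : Fin n, ∀ J' : Finset (Fin n), j ∉ J' → J'.card = m - 1 →
      ∀ u ∈ Submodule.span ℝ (h '' (J' : Set (Fin n))), u ≠ 0 →
        |(⟪h j, u⟫)| / ‖u‖ ≤ ρ)
    (J : Finset (Fin n)) (hJ : J.card = m) (a : Fin n → ℝ)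
    (u : EuclideanSpace ℝ (Fin r)) (hu : u = ∑ j ∈ J, a j • h j)
    (hnorm : ‖u‖ ≤ 2 * n) :
    ∀ j ∈ J, |a j| ≤ 2 * n / Real.sqrt (1 - ρ ^ 2) := by
  intro j hj
  have hs : (0:ℝ) < 1 - ρ ^ 2 := by nlinarith
  set v : EuclideanSpace ℝ (Fin r) := ∑ j' ∈ J.erase j, a j' • h j' with hv
  have hvmem : v ∈ Submodule.span ℝ (h '' ((J.erase j : Finset (Fin n)) : Set (Fin n))) := by
    refine Submodule.sum_mem _ fun i hi => Submodule.smul_mem _ _ ?_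
    exact Submodule.subset_span ⟨i, hi, rfl⟩
  have hu' : u = a j • h j + v := by
    rw [hu, hv]; exact (Finset.add_sum_erase J _ hj).symm
  have hip : |⟪h j, v⟫| ≤ ρ * ‖v‖ := by
    by_cases hv0 : v = 0
    · simp [hv0]
    · have hc := hcoh j (J.erase j) (Finset.notMem_erase j J)
        (by rw [Finset.card_erase_of_mem hj, hJ]) v hvmem hv0
      have hvpos : (0:ℝ) < ‖v‖ := norm_pos_iff.mpr hv0
      calc |⟪h j, v⟫| = |⟪h j, v⟫| / ‖v‖ * ‖v‖ := by field_simp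
        _ ≤ ρ * ‖v‖ := by exact mul_le_mul_of_nonneg_right hc hvpos.le
  have hexp : ‖u‖ ^ 2 = (a j) ^ 2 + 2 * (a j * ⟪h j, v⟫) + ‖v‖ ^ 2 := by
    rw [hu', norm_add_sq_real, real_inner_smul_left, norm_smul, hunit j]
    simp [mul_pow, sq_abs]
  have habs : |a j * ⟪h j, v⟫| ≤ |a j| * (ρ * ‖v‖) := by
    rw [abs_mul]
    exact mul_le_mul_of_nonneg_left hip (abs_nonneg _)
  have hkey : (1 - ρ ^ 2) * (a j) ^ 2 ≤ ‖u‖ ^ 2 := by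
    have h1 := neg_abs_le (a j * ⟪h j, v⟫)
    nlinarith [sq_nonneg (‖v‖ - |a j| * ρ), sq_abs (a j)]
  have hn0 : (0:ℝ) ≤ 2 * n := by positivity
  have hsq : (|a j| * Real.sqrt (1 - ρ ^ 2)) ^ 2 ≤ (2 * n) ^ 2 := by
    rw [mul_pow, Real.sq_sqrt hs.le, sq_abs]
    nlinarith [norm_nonneg u]
  have h2 : |a j| * Real.sqrt (1 - ρ ^ 2) ≤ 2 * n := by
    have := Real.sqrt_le_sqrt hsq
    rwa [Real.sqrt_sq (by positivity), Real.sqrt_sq hn0] at this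
  rw [le_div_iff₀ (Real.sqrt_pos.mpr hs)]
  exact h2
end

section
/- Let 0 ≤ ρ' ≤ ρ < 1, let n > 0 be real, set θ = n·√((1+ρ)/(1−ρ)), and suppose ξ₀, ξ are real numbers with |ξ₀| > θ and |ξ| ≤ |ξ₀|·ρ' + √(1 − ρ'²)·n. Then |ξ₀| > |ξ|. -/
theorem stmt_16 (ρ ρ' n θ ξ₀ ξ : ℝ) (hρ'0 : 0 ≤ ρ') (hρ'ρ : ρ' ≤ ρ) (hρ1 : ρ < 1)
    (hn : 0 < n) (hθ : θ = n * Real.sqrt ((1 + ρ) / (1 - ρ)))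
    (hξ₀ : |ξ₀| > θ) (hξ : |ξ| ≤ |ξ₀| * ρ' + Real.sqrt (1 - ρ' ^ 2) * n) :
    |ξ₀| > |ξ| := by
  have hρ'1 : ρ' < 1 := lt_of_le_of_lt hρ'ρ hρ1
  set s := Real.sqrt ((1 + ρ') / (1 - ρ')) with hs
  have hmono : s ≤ Real.sqrt ((1 + ρ) / (1 - ρ)) := by
    apply Real.sqrt_le_sqrt
    rw [div_le_div_iff₀ (by linarith) (by linarith)]
    nlinarith
  have hξ₀s : n * s < |ξ₀| := by
    calc n * s ≤ n * Real.sqrt ((1 + ρ) / (1 - ρ)) := by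
          exact mul_le_mul_of_nonneg_left hmono hn.le
      _ < |ξ₀| := by rw [← hθ]; exact hξ₀
  have hsq : Real.sqrt (1 - ρ' ^ 2) = (1 - ρ') * s := by
    have harg : 1 - ρ' ^ 2 = ((1 + ρ') / (1 - ρ')) * (1 - ρ') ^ 2 := by
      have h1 : (1:ℝ) - ρ' ≠ 0 := by linarith
      field_simp
      ring
    rw [harg, Real.sqrt_mul (div_nonneg (by linarith) (by linarith)), Real.sqrt_sq (by linarith : (0:ℝ) ≤ 1 - ρ'), hs,
      mul_comm]
  rw [hsq] at hξ
  have hsnn : 0 ≤ s := Real.sqrt_nonneg _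
  nlinarith [hξ, mul_lt_mul_of_pos_left hξ₀s (by linarith : (0:ℝ) < 1 - ρ')]
end
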